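/- Inscribed polygon setup with n odd: let n ≥ 3 be odd, o : E, ρ > 0, and let α : Fin n → ℝ be strictly increasing with α (n−1) − α 0 < 2π; define vertices v : ZMod n → E by v k = o + ρ • (Real.cos (α k̄), Real.sin (α k̄)), where k̄ is the canonical representative of k. Fix i : ZMod n and let L_i be the affine span of {o, v i} (the line through the center o and the vertex v i). Then the reflection across L_i maps the vertex set onto itself, (EuclideanGeometry.reflection L_i) '' Set.range v = Set.range v, if and only if dist (v i) (v (i + k)) = dist (v i) (v (i − k)) for every k : ZMod n. -/

import Mathlib

noncomputable abbrev E : Type := EuclideanSpace ℝ (Fin 2)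

open Real
open scoped InnerProductSpace

noncomputable def ee (t : ℝ) : E := (WithLp.equiv 2 (Fin 2 → ℝ)).symm ![Real.cos t, Real.sin t]

lemma inner_ee (s t : ℝ) : ⟪ee s, ee t⟫_ℝ = Real.cos (s - t) := by
  simp [ee, PiLp.inner_apply, Fin.sum_univ_two, Real.cos_sub, mul_comm]

lemma norm_ee (t : ℝ) : ‖ee t‖ = 1 := by
  have h := inner_ee t t
  simp at h
  rw [norm_eq_sqrt_real_inner (ee t), inner_ee]
  simp

lemma ee_eq_iff {s t : ℝ} : ee s = ee t ↔ (s : Real.Angle) = (t : Real.Angle) := by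
  constructor
  · intro h
    have h1 : Real.cos s = Real.cos t := congrFun (congrArg (WithLp.equiv 2 (Fin 2 → ℝ)) h) 0
    have h2 : Real.sin s = Real.sin t := congrFun (congrArg (WithLp.equiv 2 (Fin 2 → ℝ)) h) 1
    exact Real.Angle.cos_sin_inj h1 h2
  · intro h
    have h1 : Real.cos s = Real.cos t := by
      rw [← Real.Angle.cos_coe, ← Real.Angle.cos_coe, h]
    have h2 : Real.sin s = Real.sin t := by
      rw [← Real.Angle.sin_coe, ← Real.Angle.sin_coe, h]
    simp [ee, h1, h2]

lemma norm_ee_sub (s t : ℝ) : ‖ee s - ee t‖ = Real.sqrt (2 - 2 * Real.cos (s - t)) := by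
  rw [norm_eq_sqrt_real_inner (ee s - ee t)]
  congr 1
  rw [inner_sub_sub_self]
  simp only [inner_ee]
  have : t - s = -(s - t) := by ring
  rw [this, Real.cos_neg]
  simp
  ring

lemma ee_reflect' (θ u : ℝ) : (2 * Real.cos u) • ee θ - ee (u + θ) = ee (θ - u) := by
  ext j
  fin_cases j <;>
    simp [ee, Real.cos_add, Real.sin_add, Real.cos_sub, Real.sin_sub] <;> ring

lemma ee_reflect (θ t : ℝ) : (2 * Real.cos (t - θ)) • ee θ - ee t = ee (2*θ - t) := by
  have h := ee_reflect' θ (t - θ)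
  rw [show t - θ + θ = t from by ring, show θ - (t - θ) = 2*θ - t from by ring] at h
  exact h

lemma dist_pts (o : E) {ρ : ℝ} (s t : ℝ) (hρ : 0 ≤ ρ) :
    dist (o + ρ • ee s) (o + ρ • ee t) = ρ * Real.sqrt (2 - 2 * Real.cos (s - t)) := by
  rw [dist_eq_norm]
  have h : (o + ρ • ee s) - (o + ρ • ee t) = ρ • (ee s - ee t) := by
    rw [smul_sub]; abel
  rw [h, norm_smul, norm_ee_sub]
  simp [abs_of_nonneg hρ]

lemma reflection_pt (o : E) {ρ : ℝ} (θ t : ℝ) (hρ : ρ ≠ 0) :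
    EuclideanGeometry.reflection (affineSpan ℝ {o, o + ρ • ee θ}) (o + ρ • ee t)
      = o + ρ • ee (2*θ - t) := by
  set sp := affineSpan ℝ {o, o + ρ • ee θ} with hs
  haveI : Nonempty sp := ⟨⟨o, left_mem_affineSpan_pair ℝ _ _⟩⟩
  have hdir : sp.direction = ℝ ∙ (ee θ) := by
    rw [hs, direction_affineSpan, vectorSpan_pair_rev]
    have : (o + ρ • ee θ) -ᵥ o = ρ • ee θ := by simp
    rw [this]
    exact Submodule.span_singleton_smul_eq (isUnit_iff_ne_zero.mpr hρ) _
  have hproj : (EuclideanGeometry.orthogonalProjection sp (o + ρ • ee t) : E)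
      = o + (ρ * Real.cos (t - θ)) • ee θ := by
    have hmem : o + (ρ * Real.cos (t - θ)) • ee θ ∈ sp := by
      have h := smul_vsub_vadd_mem_affineSpan_pair (Real.cos (t-θ)) o (o + ρ • ee θ)
      have he : Real.cos (t-θ) • ((o + ρ • ee θ) -ᵥ o) +ᵥ o = o + (ρ * Real.cos (t - θ)) • ee θ := by
        simp [smul_smul, mul_comm]
        abel
      rwa [he] at h
    have horth : (o + ρ • ee t) -ᵥ (o + (ρ * Real.cos (t - θ)) • ee θ) ∈ sp.directionᗮ := by
      rw [hdir, Submodule.mem_orthogonal_singleton_iff_inner_right]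
      have he : (o + ρ • ee t) -ᵥ (o + (ρ * Real.cos (t - θ)) • ee θ)
          = ρ • ee t - (ρ * Real.cos (t - θ)) • ee θ := by
        simp
      rw [he, inner_sub_right, real_inner_smul_right, real_inner_smul_right, inner_ee, inner_ee]
      rw [show θ - t = -(t - θ) by ring, Real.cos_neg]
      simp
    have hq : o + (ρ * Real.cos (t - θ)) • ee θ
        ∈ (sp : Set E) ∩ AffineSubspace.mk' (o + ρ • ee t) sp.directionᗮ := by
      refine ⟨hmem, (AffineSubspace.mem_mk').mpr ?_⟩
      have := (Submodule.neg_mem_iff _).mpr horth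
      rwa [neg_vsub_eq_vsub_rev] at this
    rw [EuclideanGeometry.inter_eq_singleton_orthogonalProjection (o + ρ • ee t)] at hq
    exact (Set.mem_singleton_iff.mp hq).symm
  rw [EuclideanGeometry.reflection_apply', hproj]
  have : ρ • ee (2*θ - t) = (2 * (ρ * Real.cos (t - θ))) • ee θ - ρ • ee t := by
    rw [← ee_reflect θ t, smul_sub, ← mul_smul]
    ring_nf
  rw [vsub_eq_sub, vadd_eq_add, this]
  rw [two_mul, add_smul]
  abel

lemma strictMono_fin_le {m : ℕ} (f : Fin m → Fin m) (hf : StrictMono f) :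
    ∀ k : Fin m, (k : ℕ) ≤ (f k : ℕ) := by
  have : ∀ a : ℕ, ∀ k : Fin m, (k : ℕ) = a → a ≤ (f k : ℕ) := by
    intro a
    induction a with
    | zero => intro k _; omega
    | succ b ih =>
      intro k hk
      have hb : b < m := by omega
      have hlt : (⟨b, hb⟩ : Fin m) < k := by simp [Fin.lt_def]; omega
      have := ih ⟨b, hb⟩ rfl
      have := hf hlt
      rw [Fin.lt_def] at this
      omega
  exact fun k => this k k rfl

lemma strictMono_fin_id {m : ℕ} (f : Fin m → Fin m) (hf : StrictMono f) :
    ∀ k : Fin m, f k = k := by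
  intro k
  have h1 := strictMono_fin_le f hf k
  have h2 : ∀ j : Fin m, (f j : ℕ) ≤ j := by
    intro j
    set g : Fin m → Fin m := fun t => (f t.rev).rev with hg
    have hgm : StrictMono g := by
      intro a b hab
      simp only [hg]
      rw [Fin.rev_lt_rev]
      exact hf (by rwa [Fin.rev_lt_rev])
    have := strictMono_fin_le g hgm j.rev
    simp only [hg, Fin.rev_rev] at this
    rw [Fin.val_rev, Fin.val_rev] at this
    omega
  exact Fin.ext (le_antisymm (h2 k) h1)

lemma ee_add_two_pi (t : ℝ) : ee (t + 2 * Real.pi) = ee t := by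
  rw [ee_eq_iff, Real.Angle.angle_eq_iff_two_pi_dvd_sub]
  exact ⟨1, by ring⟩

lemma int_pin {x : ℝ} {z : ℤ} (hx : x = 2 * Real.pi * z) (h1 : 0 < x)
    (h2 : x < 4 * Real.pi) : x = 2 * Real.pi := by
  have hπ := Real.pi_pos
  have hz1 : (0:ℝ) < (z:ℝ) := by
    by_contra hh
    push_neg at hh
    nlinarith [mul_nonneg hπ.le (neg_nonneg.mpr hh)]
  have hz2 : (z:ℝ) < 2 := by
    by_contra hh
    push_neg at hh
    nlinarith
  have hz1' : (0:ℤ) < z := by exact_mod_cast hz1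
  have hz2' : z < 2 := by exact_mod_cast hz2
  have : z = 1 := by omega
  rw [hx, this]
  norm_num

lemma int_pin0 {x : ℝ} {z : ℤ} (hx : x = 2 * Real.pi * z) (h1 : -(2 * Real.pi) < x)
    (h2 : x < 2 * Real.pi) : x = 0 := by
  have hπ := Real.pi_pos
  have hz1 : (-1:ℝ) < (z:ℝ) := by
    by_contra hh
    push_neg at hh
    nlinarith [mul_nonneg hπ.le (neg_nonneg.mpr (by linarith : (z:ℝ) + 1 ≤ 0))]
  have hz2 : (z:ℝ) < 1 := by
    by_contra hh
    push_neg at hh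
    nlinarith
  have hz1' : (-1:ℤ) < z := by exact_mod_cast hz1
  have hz2' : z < 1 := by exact_mod_cast hz2
  have : z = 0 := by omega
  rw [hx, this]
  norm_num
lemma rev_step (n : ℕ) (hn : 3 ≤ n) [NeZero n] (ψ : Fin n → ℝ) (hψ0 : ψ 0 = 0)
    (hψmono : StrictMono ψ) (hψlt : ∀ k : Fin n, ψ k < 2 * Real.pi)
    (jf : Fin n → Fin n)
    (hjval : ∀ k : Fin n, k ≠ 0 → ψ (jf k) = 2 * Real.pi - ψ k)
    (krev : Fin n → Fin n)
    (hkrev_val : ∀ k : Fin n, k ≠ 0 → (krev k : ℕ) = n - (k : ℕ)) :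
    ∀ k : Fin n, k ≠ 0 → ψ (krev k) = 2 * Real.pi - ψ k := by
  have hπ := Real.pi_pos
  have hjne : ∀ k : Fin n, k ≠ 0 → (jf k : ℕ) ≠ 0 := by
    intro k hk h0
    have h1 := hjval k hk
    have h2 : jf k = 0 := Fin.ext (by rw [h0, Fin.val_zero])
    rw [h2, hψ0] at h1
    have := hψlt k
    linarith
  obtain ⟨emb, hemb⟩ : ∃ e : Fin (n-1) → Fin n, ∀ t : Fin (n-1), (e t : ℕ) = (t : ℕ) + 1 :=
    ⟨fun t => ⟨(t : ℕ) + 1, by have := t.isLt; omega⟩, fun t => rfl⟩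
  have hembne : ∀ t : Fin (n-1), emb t ≠ 0 := by
    intro t h
    have := congrArg Fin.val h
    rw [hemb, Fin.val_zero] at this
    omega
  obtain ⟨f, hfv⟩ : ∃ f : Fin (n-1) → Fin (n-1), ∀ t : Fin (n-1),
      (f t : ℕ) = (n - 1 - (jf (emb t) : ℕ)) % (n - 1) :=
    ⟨fun t => ⟨_, Nat.mod_lt _ (by omega)⟩, fun t => rfl⟩
  have hfmono : StrictMono f := by
    intro a b hab
    rw [Fin.lt_def] at hab
    have hψab : ψ (emb a) < ψ (emb b) := by
      apply hψmono
      rw [Fin.lt_def, hemb, hemb]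
      omega
    have e1 := hjval (emb a) (hembne a)
    have e2 := hjval (emb b) (hembne b)
    have hlt2 : ψ (jf (emb b)) < ψ (jf (emb a)) := by linarith
    have hjlt := hψmono.lt_iff_lt.mp hlt2
    rw [Fin.lt_def] at hjlt
    have hbb := hjne _ (hembne b)
    have haa := (jf (emb a)).isLt
    have hbb2 := (jf (emb b)).isLt
    rw [Fin.lt_def, hfv a, hfv b]
    rw [Nat.mod_eq_of_lt (by omega), Nat.mod_eq_of_lt (by omega)]
    omega
  have hfid := strictMono_fin_id f hfmono
  intro k hk
  have hk0 : (k : ℕ) ≠ 0 := fun h => hk (Fin.ext (by rw [h, Fin.val_zero]))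
  have hklt := k.isLt
  obtain ⟨t, htv⟩ : ∃ t : Fin (n-1), (t : ℕ) = (k : ℕ) - 1 := ⟨⟨(k : ℕ) - 1, by omega⟩, rfl⟩
  have ht := hfid t
  have hvv := congrArg Fin.val ht
  rw [hfv] at hvv
  have hkk : emb t = k := Fin.ext (by rw [hemb, htv]; omega)
  rw [hkk, htv] at hvv
  have hjlt := (jf k).isLt
  have hjne' := hjne k hk
  rw [Nat.mod_eq_of_lt (by omega)] at hvv
  have hjv : (jf k : ℕ) = n - (k : ℕ) := by omega
  have hkrevjf : krev k = jf k := Fin.ext (by rw [hkrev_val k hk, hjv])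
  rw [hkrevjf]
  exact hjval k hk
/-- For an inscribed polygon with an odd number of vertices, the line through the center
`o` and a vertex `v i` is a line of straight symmetry of the polygon if and only if the
clockwise and anticlockwise tuples of distances from `v i` agree. -/
theorem reflection_through_vertex_iff_distances_agree
    (n : ℕ) (hn : 3 ≤ n) (hodd : Odd n) (o : E) (ρ : ℝ) (hρ : 0 < ρ)
    (α : Fin n → ℝ) (hα : StrictMono α)
    (hspan : α ⟨n - 1, by omega⟩ - α ⟨0, by omega⟩ < 2 * Real.pi)
    (v : ZMod n → E)
    (hv : ∀ k : Fin n, v ((k : ℕ) : ZMod n) =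
      o + ρ • (WithLp.equiv 2 (Fin 2 → ℝ)).symm ![Real.cos (α k), Real.sin (α k)])
    (i : ZMod n) :
    (EuclideanGeometry.reflection (affineSpan ℝ {o, v i})) '' Set.range v = Set.range v ↔
      ∀ k : ZMod n, dist (v i) (v (i + k)) = dist (v i) (v (i - k)) := by
  haveI : NeZero n := ⟨by omega⟩
  have hπ := Real.pi_pos
  obtain ⟨iv, hiv⟩ : ∃ m : ℕ, m = i.val := ⟨_, rfl⟩
  have hivlt : iv < n := hiv ▸ i.val_lt
  -- basic monotonicity helpers
  have hle : ∀ {a b : ℕ} (ha : a < n) (hb : b < n), a ≤ b → α ⟨a, ha⟩ ≤ α ⟨b, hb⟩ := by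
    intro a b ha hb h
    exact hα.monotone (by simp [Fin.le_def]; omega)
  have hlt : ∀ {a b : ℕ} (ha : a < n) (hb : b < n), a < b → α ⟨a, ha⟩ < α ⟨b, hb⟩ := by
    intro a b ha hb h
    exact hα (by simp [Fin.lt_def]; omega)
  have hwin : ∀ {a b : ℕ} (ha : a < n) (hb : b < n), α ⟨a, ha⟩ - α ⟨b, hb⟩ < 2 * Real.pi := by
    intro a b ha hb
    have h1 : α ⟨a, ha⟩ ≤ α ⟨n-1, by omega⟩ := hle ha (by omega) (by omega)
    have h2 : α ⟨0, by omega⟩ ≤ α ⟨b, hb⟩ := hle (by omega) hb (by omega)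
    linarith
  have hθv : ∀ m : ZMod n, v m = o + ρ • ee (α ⟨m.val, m.val_lt⟩) := by
    intro m
    have h := hv ⟨m.val, m.val_lt⟩
    rwa [show (((⟨m.val, m.val_lt⟩ : Fin n) : ℕ) : ZMod n) = m from ZMod.natCast_rightInverse m] at h
  obtain ⟨θi, hθi⟩ : ∃ t : ℝ, t = α ⟨iv, hivlt⟩ := ⟨_, rfl⟩
  -- the angular offsets
  obtain ⟨ψ, hψ_lt, hψ_ge⟩ : ∃ ψ : Fin n → ℝ,
      (∀ (k : Fin n) (h : iv + (k : ℕ) < n), ψ k = α ⟨iv + (k : ℕ), h⟩ - α ⟨iv, hivlt⟩) ∧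
      (∀ (k : Fin n) (h : ¬ (iv + (k : ℕ) < n)),
        ψ k = α ⟨iv + (k : ℕ) - n, by have := k.isLt; omega⟩ - α ⟨iv, hivlt⟩ + 2 * Real.pi) := by
    refine ⟨fun k =>
      if h : iv + (k : ℕ) < n then α ⟨iv + (k : ℕ), h⟩ - α ⟨iv, hivlt⟩
      else α ⟨iv + (k : ℕ) - n, by have := k.isLt; omega⟩ - α ⟨iv, hivlt⟩ + 2 * Real.pi,
      ?_, ?_⟩
    · intro k h
      exact dif_pos h
    · intro k h
      exact dif_neg h
  have hψ0 : ψ 0 = 0 := by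
    have h : iv + ((0 : Fin n) : ℕ) < n := by rw [Fin.val_zero]; omega
    rw [hψ_lt 0 h, sub_eq_zero]
    congr 1
    all_goals exact Fin.ext (by simp [Fin.val_zero])
  have hψmono : StrictMono ψ := by
    intro a b hab
    rw [Fin.lt_def] at hab
    by_cases ha : iv + (a : ℕ) < n
    · by_cases hb : iv + (b : ℕ) < n
      · rw [hψ_lt a ha, hψ_lt b hb]
        have := hlt ha hb (by omega)
        linarith
      · rw [hψ_lt a ha, hψ_ge b hb]
        have h1 : α ⟨iv + (a : ℕ), ha⟩ ≤ α ⟨n - 1, by omega⟩ := hle _ _ (by omega)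
        have h2 : α ⟨0, by omega⟩ ≤ α ⟨iv + (b : ℕ) - n, by have := b.isLt; omega⟩ :=
          hle _ _ (by omega)
        linarith
    · by_cases hb : iv + (b : ℕ) < n
      · omega
      · rw [hψ_ge a ha, hψ_ge b hb]
        have := hlt (show iv + (a : ℕ) - n < n by have := a.isLt; omega)
          (show iv + (b : ℕ) - n < n by have := b.isLt; omega) (by omega)
        linarith
  have hψlt : ∀ k : Fin n, ψ k < 2 * Real.pi := by
    intro k
    by_cases h : iv + (k : ℕ) < n
    · rw [hψ_lt k h]
      exact hwin _ _
    · rw [hψ_ge k h]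
      have := hlt (show iv + (k : ℕ) - n < n by have := k.isLt; omega) hivlt
        (by have := k.isLt; omega)
      linarith
  have hψpos : ∀ k : Fin n, k ≠ 0 → 0 < ψ k := by
    intro k hk
    have hk0 : (k : ℕ) ≠ 0 := fun h => hk (Fin.ext (by rw [h, Fin.val_zero]))
    have h0 : (0 : Fin n) < k := by rw [Fin.lt_def, Fin.val_zero]; omega
    calc 0 = ψ 0 := hψ0.symm
    _ < ψ k := hψmono h0
  have hψnonneg : ∀ k : Fin n, 0 ≤ ψ k := by
    intro k
    rcases eq_or_ne k 0 with rfl | h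
    · rw [hψ0]
    · exact (hψpos k h).le
  -- vertex formula in terms of ψ
  have hG : ∀ k : Fin n, v (i + ((k : ℕ) : ZMod n)) = o + ρ • ee (θi + ψ k) := by
    intro k
    have hval : (i + ((k : ℕ) : ZMod n)).val = (iv + (k : ℕ)) % n := by
      rw [ZMod.val_add, ZMod.val_cast_of_lt k.isLt, ← hiv]
    rw [hθv]
    by_cases h : iv + (k : ℕ) < n
    · have hv2 : (i + ((k : ℕ) : ZMod n)).val = iv + (k : ℕ) := by
        rw [hval, Nat.mod_eq_of_lt h]
      have harg : α ⟨(i + ((k : ℕ) : ZMod n)).val, (i + ((k : ℕ) : ZMod n)).val_lt⟩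
          = θi + ψ k := by
        rw [hψ_lt k h, hθi]
        have heq : (⟨(i + ((k : ℕ) : ZMod n)).val, (i + ((k : ℕ) : ZMod n)).val_lt⟩ : Fin n)
            = ⟨iv + (k : ℕ), h⟩ := Fin.ext hv2
        rw [heq]
        ring
      rw [harg]
    · have hv2 : (i + ((k : ℕ) : ZMod n)).val = iv + (k : ℕ) - n := by
        rw [hval, Nat.mod_eq_sub_mod (by omega), Nat.mod_eq_of_lt (by have := k.isLt; omega)]
      have harg : α ⟨(i + ((k : ℕ) : ZMod n)).val, (i + ((k : ℕ) : ZMod n)).val_lt⟩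
          = θi + ψ k - 2 * Real.pi := by
        rw [hψ_ge k h, hθi]
        have heq : (⟨(i + ((k : ℕ) : ZMod n)).val, (i + ((k : ℕ) : ZMod n)).val_lt⟩ : Fin n)
            = ⟨iv + (k : ℕ) - n, by have := k.isLt; omega⟩ := Fin.ext hv2
        rw [heq]
        ring
      rw [harg]
      have hper : ee (θi + ψ k - 2 * Real.pi) = ee (θi + ψ k) := by
        conv_rhs => rw [show θi + ψ k = (θi + ψ k - 2 * Real.pi) + 2 * Real.pi from by ring]
        rw [ee_add_two_pi]
      rw [hper]
  have hvi : v i = o + ρ • ee θi := by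
    rw [hθv i, hθi]
    have heq : (⟨i.val, i.val_lt⟩ : Fin n) = ⟨iv, hivlt⟩ := Fin.ext hiv.symm
    rw [heq]
  -- the range of v
  have hrange : Set.range v = Set.range (fun k : Fin n => o + ρ • ee (θi + ψ k)) := by
    ext x
    constructor
    · rintro ⟨m, rfl⟩
      refine ⟨⟨(m - i).val, (m - i).val_lt⟩, ?_⟩
      have hmi : i + ((((⟨(m - i).val, (m - i).val_lt⟩ : Fin n) : ℕ)) : ZMod n) = m := by
        rw [show (((⟨(m - i).val, (m - i).val_lt⟩ : Fin n) : ℕ) : ZMod n) = m - i from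
          ZMod.natCast_rightInverse (m - i)]
        ring
      show o + ρ • ee (θi + ψ ⟨(m - i).val, (m - i).val_lt⟩) = v m
      rw [← hG, hmi]
    · rintro ⟨k, rfl⟩
      exact ⟨i + ((k : ℕ) : ZMod n), hG k⟩
  -- reflection computation
  have hR : ∀ p : E, EuclideanGeometry.reflection (affineSpan ℝ {o, v i}) p
      = EuclideanGeometry.reflection (affineSpan ℝ {o, o + ρ • ee θi}) p := by
    intro p
    exact EuclideanGeometry.eq_reflection_of_eq_subspace (by rw [hvi]) p
  have hRv : ∀ k : Fin n, EuclideanGeometry.reflection (affineSpan ℝ {o, v i})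
      (v (i + ((k : ℕ) : ZMod n))) = o + ρ • ee (θi - ψ k) := by
    intro k
    rw [hG k, hR, reflection_pt o θi (θi + ψ k) hρ.ne',
      show 2*θi - (θi + ψ k) = θi - ψ k from by ring]
  -- distances
  have hdist : ∀ k : Fin n, dist (v i) (v (i + ((k : ℕ) : ZMod n)))
      = ρ * Real.sqrt (2 - 2 * Real.cos (ψ k)) := by
    intro k
    rw [hvi, hG k, dist_pts o θi (θi + ψ k) hρ.le,
      show θi - (θi + ψ k) = -(ψ k) from by ring, Real.cos_neg]
  have hcos_of_dist : ∀ a b : Fin n,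
      dist (v i) (v (i + ((a : ℕ) : ZMod n))) = dist (v i) (v (i + ((b : ℕ) : ZMod n))) →
      Real.cos (ψ a) = Real.cos (ψ b) := by
    intro a b h
    rw [hdist a, hdist b] at h
    have h' := mul_left_cancel₀ hρ.ne' h
    have ha : (0:ℝ) ≤ 2 - 2 * Real.cos (ψ a) := by nlinarith [Real.cos_le_one (ψ a)]
    have hb : (0:ℝ) ≤ 2 - 2 * Real.cos (ψ b) := by nlinarith [Real.cos_le_one (ψ b)]
    have := (Real.sqrt_inj ha hb).mp h'
    linarith
  -- the reversal map
  obtain ⟨krev, hkrevv⟩ : ∃ g : Fin n → Fin n, ∀ k : Fin n, (g k : ℕ) = (n - (k : ℕ)) % n :=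
    ⟨fun k => ⟨(n - (k : ℕ)) % n, Nat.mod_lt _ (by omega)⟩, fun k => rfl⟩
  have hkrev_val : ∀ k : Fin n, k ≠ 0 → ((krev k : ℕ)) = n - (k : ℕ) := by
    intro k hk
    have hk0 : (k : ℕ) ≠ 0 := fun h => hk (Fin.ext (by rw [h, Fin.val_zero]))
    rw [hkrevv]
    exact Nat.mod_eq_of_lt (by omega)
  have hkrev0 : krev 0 = 0 := by
    apply Fin.ext
    rw [hkrevv, Fin.val_zero, Nat.sub_zero, Nat.mod_self]
  have hkrev_zmod : ∀ k : Fin n, i - ((k : ℕ) : ZMod n) = i + (((krev k : ℕ)) : ZMod n) := by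
    intro k
    rcases eq_or_ne k 0 with rfl | hk
    · rw [hkrev0, Fin.val_zero]
      simp
    · rw [hkrev_val k hk]
      have h1 : (((n - (k : ℕ) : ℕ)) : ZMod n) = -(((k : ℕ)) : ZMod n) := by
        rw [Nat.cast_sub (le_of_lt k.isLt), ZMod.natCast_self]
        ring
      rw [h1]
      ring
  -- pinning lemmas
  have hjpin : ∀ k j : Fin n, k ≠ 0 → ee (θi - ψ k) = ee (θi + ψ j) →
      ψ j = 2 * Real.pi - ψ k := by
    intro k j hk he
    rw [ee_eq_iff, Real.Angle.angle_eq_iff_two_pi_dvd_sub] at he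
    obtain ⟨z, hz⟩ := he
    have hsum : ψ k + ψ j = 2 * Real.pi * ((-z : ℤ) : ℝ) := by push_cast; linarith
    have h1 : 0 < ψ k + ψ j := by
      have := hψpos k hk; have := hψnonneg j; linarith
    have h2 : ψ k + ψ j < 4 * Real.pi := by
      have := hψlt k; have := hψlt j; linarith
    have := int_pin hsum h1 h2
    linarith
  have hpin2 : ∀ k : Fin n, k ≠ 0 → Real.cos (ψ k) = Real.cos (ψ (krev k)) →
      ψ (krev k) = 2 * Real.pi - ψ k := by
    intro k hk hc
    rw [Real.cos_eq_cos_iff] at hc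
    obtain ⟨z, hz | hz⟩ := hc
    · exfalso
      have h1 := hψpos k hk
      have h2 := hψlt k
      have h3 := hψnonneg (krev k)
      have h4 := hψlt (krev k)
      have hz'' : ψ (krev k) - ψ k = 2 * Real.pi * ((z : ℤ) : ℝ) := by push_cast; linarith [hz]
      have h0 := int_pin0 hz'' (by linarith) (by linarith)
      have heq : ψ (krev k) = ψ k := by linarith
      have hkk : krev k = k := hψmono.injective heq
      have hvals := congrArg Fin.val hkk
      rw [hkrev_val k hk] at hvals
      obtain ⟨c, hc'⟩ := hodd
      have hk0 : (k : ℕ) ≠ 0 := fun h => hk (Fin.ext (by rw [h, Fin.val_zero]))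
      have := k.isLt
      omega
    · have h1 := hψpos k hk
      have h3 := hψnonneg (krev k)
      have hsum : ψ k + ψ (krev k) = 2 * Real.pi * ((z : ℤ) : ℝ) := by push_cast; linarith [hz]
      have h2 := hψlt k
      have h4 := hψlt (krev k)
      have := int_pin hsum (by linarith) (by linarith)
      linarith
  -- main equivalence
  constructor
  · intro hL k
    have hP : ∀ a : Fin n, ∃ j : Fin n, ee (θi - ψ a) = ee (θi + ψ j) := by
      intro a
      have hx : EuclideanGeometry.reflection (affineSpan ℝ {o, v i})
          (v (i + ((a : ℕ) : ZMod n))) ∈ Set.range v := by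
        rw [← hL]
        exact Set.mem_image_of_mem _ (Set.mem_range_self _)
      rw [hrange] at hx
      obtain ⟨j, hj⟩ := hx
      refine ⟨j, ?_⟩
      rw [hRv a] at hj
      have hj' : o + ρ • ee (θi + ψ j) = o + ρ • ee (θi - ψ a) := hj
      have h2 : ρ • ee (θi + ψ j) = ρ • ee (θi - ψ a) := by
        rwa [add_right_inj] at hj'
      exact (smul_right_injective E hρ.ne' h2).symm
    choose jf hjf using hP
    have hjval : ∀ a : Fin n, a ≠ 0 → ψ (jf a) = 2 * Real.pi - ψ a :=
      fun a ha => hjpin a (jf a) ha (hjf a)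
    have hrev' := rev_step n hn ψ hψ0 hψmono hψlt jf hjval krev hkrev_val
    have hkk : (((⟨k.val, k.val_lt⟩ : Fin n) : ℕ) : ZMod n) = k := ZMod.natCast_rightInverse k
    rw [← hkk, hkrev_zmod ⟨k.val, k.val_lt⟩, hdist ⟨k.val, k.val_lt⟩,
      hdist (krev ⟨k.val, k.val_lt⟩)]
    rcases eq_or_ne (⟨k.val, k.val_lt⟩ : Fin n) 0 with h0 | h0
    · rw [h0, hkrev0]
    · rw [hrev' _ h0, Real.cos_two_pi_sub]
  · intro hD
    have hcos : ∀ k : Fin n, Real.cos (ψ k) = Real.cos (ψ (krev k)) := by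
      intro k
      apply hcos_of_dist
      have h := hD ((k : ℕ) : ZMod n)
      rwa [hkrev_zmod k] at h
    have hsub : (EuclideanGeometry.reflection (affineSpan ℝ {o, v i})) '' Set.range v
        ⊆ Set.range v := by
      rintro x ⟨y, hy, rfl⟩
      rw [hrange] at hy
      obtain ⟨k, hk⟩ := hy
      have hk' : o + ρ • ee (θi + ψ k) = y := hk
      have hy2 : y = v (i + ((k : ℕ) : ZMod n)) := by rw [hG k, hk']
      rw [hy2, hRv k]
      rcases eq_or_ne k 0 with rfl | hk0
      · rw [show θi - ψ 0 = θi + ψ 0 from by rw [hψ0]; ring]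
        rw [hrange]
        exact ⟨0, rfl⟩
      · have hrev2 := hpin2 k hk0 (hcos k)
        have hee : ee (θi - ψ k) = ee (θi + ψ (krev k)) := by
          rw [ee_eq_iff, Real.Angle.angle_eq_iff_two_pi_dvd_sub]
          exact ⟨-1, by rw [hrev2]; push_cast; ring⟩
        rw [hee, hrange]
        exact ⟨krev k, rfl⟩
    apply le_antisymm hsub
    intro x hx
    have hinv : EuclideanGeometry.reflection (affineSpan ℝ {o, v i})
        (EuclideanGeometry.reflection (affineSpan ℝ {o, v i}) x) = x :=
      EuclideanGeometry.reflection_reflection _ x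
    have hx2 : EuclideanGeometry.reflection (affineSpan ℝ {o, v i}) x ∈ Set.range v :=
      hsub (Set.mem_image_of_mem _ hx)
    exact ⟨_, hx2, hinv⟩
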